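/- A finite directed graph is an IO-graph if and only if it is a disjoint union of directed paths (lines) and/or directed cycles (circles). -/
import Mathlib


/-- Isomorphism of digraphs on arbitrary vertex types. -/
def IsoT {α β : Type} (E : α → α → Prop) (F : β → β → Prop) : Prop :=
  ∃ φ : α ≃ β, ∀ u v, E u v ↔ F (φ u) (φ v)

/-- `G` is (isomorphic to) an induced substructure of `G'`. -/
def IsInducedSub {n m : ℕ} (E : Fin n → Fin n → Prop) (F : Fin m → Fin m → Prop) : Prop :=
  ∃ φ : Fin n ↪ Fin m, ∀ u v, E u v ↔ F (φ u) (φ v)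

def E1 : Fin 1 → Fin 1 → Prop := fun _ _ => False
def E2 : Fin 2 → Fin 2 → Prop := fun _ _ => False
def E3 : Fin 3 → Fin 3 → Prop := fun _ _ => False
def I2 : Fin 2 → Fin 2 → Prop := fun u v => u = 0 ∧ v = 1
/-- `I₂ ⊔ E₁`: an edge plus an isolated vertex, on three vertices. -/
def I2E1 : Fin 3 → Fin 3 → Prop := fun u v => u = 0 ∧ v = 1
def I3 : Fin 3 → Fin 3 → Prop := fun u v => v.val = u.val + 1
def O3 : Fin 3 → Fin 3 → Prop := fun u v => (u.val + 1) % 3 = v.val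

/-- A digraph is an IO-graph if its induced substructures on 1, 2 and 3
vertices are among the prescribed lists. -/
def IsIO {n : ℕ} (E : Fin n → Fin n → Prop) : Prop :=
  (∀ φ : Fin 1 ↪ Fin n, IsoT (fun u v => E (φ u) (φ v)) E1) ∧
  (∀ φ : Fin 2 ↪ Fin n, IsoT (fun u v => E (φ u) (φ v)) E2 ∨
    IsoT (fun u v => E (φ u) (φ v)) I2) ∧
  (∀ φ : Fin 3 ↪ Fin n, IsoT (fun u v => E (φ u) (φ v)) E3 ∨
    IsoT (fun u v => E (φ u) (φ v)) I2E1 ∨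
    IsoT (fun u v => E (φ u) (φ v)) I3 ∨
    IsoT (fun u v => E (φ u) (φ v)) O3)

/-- The disjoint union of lines/circles indexed by `Fin k`, with component `i`
a circle of size `c i` when `bc i = true` and a line of size `c i` otherwise. -/
def DURel (k : ℕ) (c : Fin k → ℕ) (bc : Fin k → Bool) :
    ((i : Fin k) × Fin (c i)) → ((i : Fin k) × Fin (c i)) → Prop :=
  fun a b => a.1 = b.1 ∧
    (if bc a.1 then (a.2.val + 1) % c a.1 = b.2.val
     else b.2.val = a.2.val + 1)

def Good {α : Type} (E : α → α → Prop) : Prop :=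
  (∀ v, ¬ E v v) ∧ (∀ u v, E u v → ¬ E v u) ∧
  (∀ u v w, E u v → E u w → v = w) ∧ (∀ u v w, E u w → E v w → u = v)

set_option maxRecDepth 10000 in
theorem boolClassify3 : ∀ f : Fin 3 → Fin 3 → Bool,
  (∀ v, f v v = false) →
  (∀ u v, f u v = true → f v u = false) →
  (∀ u v w, f u v = true → f u w = true → v = w) →
  (∀ u v w, f u w = true → f v w = true → u = v) →
  ((∃ φ : Fin 3 ≃ Fin 3, ∀ u v, f u v = true ↔ False) ∨
   (∃ φ : Fin 3 ≃ Fin 3, ∀ u v, f u v = true ↔ (φ u = 0 ∧ φ v = 1)) ∨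
   (∃ φ : Fin 3 ≃ Fin 3, ∀ u v, f u v = true ↔ (φ v).val = (φ u).val + 1) ∨
   (∃ φ : Fin 3 ≃ Fin 3, ∀ u v, f u v = true ↔ ((φ u).val + 1) % 3 = (φ v).val)) := by decide

set_option maxRecDepth 10000 in
theorem boolClassify2 : ∀ f : Fin 2 → Fin 2 → Bool,
  (∀ v, f v v = false) →
  (∀ u v, f u v = true → f v u = false) →
  ((∃ φ : Fin 2 ≃ Fin 2, ∀ u v, f u v = true ↔ False) ∨
   (∃ φ : Fin 2 ≃ Fin 2, ∀ u v, f u v = true ↔ (φ u = 0 ∧ φ v = 1))) := by decide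

theorem classify2 (R : Fin 2 → Fin 2 → Prop) (h1 : ∀ v, ¬ R v v)
    (h2 : ∀ u v, R u v → ¬ R v u) : IsoT R E2 ∨ IsoT R I2 := by
  classical
  set f : Fin 2 → Fin 2 → Bool := fun u v => decide (R u v) with hf
  have hfr : ∀ u v, R u v ↔ f u v = true := by intro u v; simp [hf]
  rcases boolClassify2 f (fun v => by simpa [hf] using h1 v)
      (fun u v h => by simp [hf] at h ⊢; exact h2 u v h) with ⟨φ, h⟩ | ⟨φ, h⟩
  · exact Or.inl ⟨φ, fun u v => by rw [hfr u v, h u v]; exact Iff.rfl⟩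
  · exact Or.inr ⟨φ, fun u v => by rw [hfr u v, h u v]; exact Iff.rfl⟩

theorem classify3 (R : Fin 3 → Fin 3 → Prop) (h1 : ∀ v, ¬ R v v)
    (h2 : ∀ u v, R u v → ¬ R v u)
    (h3 : ∀ u v w, R u v → R u w → v = w)
    (h4 : ∀ u v w, R u w → R v w → u = v) :
    IsoT R E3 ∨ IsoT R I2E1 ∨ IsoT R I3 ∨ IsoT R O3 := by
  classical
  set f : Fin 3 → Fin 3 → Bool := fun u v => decide (R u v) with hf
  have hfr : ∀ u v, R u v ↔ f u v = true := by intro u v; simp [hf]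
  rcases boolClassify3 f (fun v => by simpa [hf] using h1 v)
      (fun u v h => by simp [hf] at h ⊢; exact h2 u v h)
      (fun u v w ha hb => by simp [hf] at ha hb; exact h3 u v w ha hb)
      (fun u v w ha hb => by simp [hf] at ha hb; exact h4 u v w ha hb) with
    ⟨φ, h⟩ | ⟨φ, h⟩ | ⟨φ, h⟩ | ⟨φ, h⟩
  · exact Or.inl ⟨φ, fun u v => by rw [hfr u v, h u v]; exact Iff.rfl⟩
  · exact Or.inr (Or.inl ⟨φ, fun u v => by rw [hfr u v, h u v]; exact Iff.rfl⟩)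
  · exact Or.inr (Or.inr (Or.inl ⟨φ, fun u v => by rw [hfr u v, h u v]; exact Iff.rfl⟩))
  · exact Or.inr (Or.inr (Or.inr ⟨φ, fun u v => by rw [hfr u v, h u v]; exact Iff.rfl⟩))

theorem good_of_io {n : ℕ} (E : Fin n → Fin n → Prop) (h : IsIO E) : Good E := by
  obtain ⟨h1, h2, h3⟩ := h
  have hl : ∀ v, ¬ E v v := by
    intro v hv
    obtain ⟨φ, hφ⟩ := h1 ⟨fun _ => v, fun a b _ => Subsingleton.elim a b⟩
    exact (hφ 0 0).mp hv
  refine ⟨hl, ?_, ?_, ?_⟩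
  · intro u v huv hvu
    have hne : u ≠ v := fun h => hl u (h ▸ huv)
    have hinj : Function.Injective ![u, v] := by
      intro a b hab
      fin_cases a <;> fin_cases b <;> simp_all <;> exact absurd hab (Ne.symm hne)
    rcases h2 ⟨![u, v], hinj⟩ with ⟨φ, hφ⟩ | ⟨φ, hφ⟩
    · exact (hφ 0 1).mp huv
    · have e1 := (hφ 0 1).mp huv
      have e2 := (hφ 1 0).mp hvu
      rw [I2] at e1 e2
      exact absurd (e1.2.symm.trans e2.1) (by decide)
  · intro u v w huv huw
    by_contra hne
    have hneuv : u ≠ v := fun h => hl u (h ▸ huv)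
    have hneuw : u ≠ w := fun h => hl u (h ▸ huw)
    have hinj : Function.Injective ![u, v, w] := by
      intro a b hab
      fin_cases a <;> fin_cases b <;> simp_all
    rcases h3 ⟨![u, v, w], hinj⟩ with ⟨φ, hφ⟩ | ⟨φ, hφ⟩ | ⟨φ, hφ⟩ | ⟨φ, hφ⟩
    · exact (hφ 0 1).mp huv
    · have e1 := (hφ 0 1).mp huv
      have e2 := (hφ 0 2).mp huw
      rw [I2E1] at e1 e2
      exact absurd (φ.injective (e1.2.trans e2.2.symm)) (by decide)
    · have e1 := (hφ 0 1).mp huv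
      have e2 := (hφ 0 2).mp huw
      rw [I3] at e1 e2
      exact absurd (φ.injective (Fin.ext (e1.trans e2.symm))) (by decide)
    · have e1 := (hφ 0 1).mp huv
      have e2 := (hφ 0 2).mp huw
      rw [O3] at e1 e2
      exact absurd (φ.injective (Fin.ext (e1.symm.trans e2))) (by decide)
  · intro u v w huw hvw
    by_contra hne
    have hneuw : u ≠ w := fun h => hl u (h ▸ huw)
    have hnevw : v ≠ w := fun h => hl v (h ▸ hvw)
    have hinj : Function.Injective ![u, v, w] := by
      intro a b hab
      fin_cases a <;> fin_cases b <;> simp_all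
    rcases h3 ⟨![u, v, w], hinj⟩ with ⟨φ, hφ⟩ | ⟨φ, hφ⟩ | ⟨φ, hφ⟩ | ⟨φ, hφ⟩
    · exact (hφ 0 2).mp huw
    · have e1 := (hφ 0 2).mp huw
      have e2 := (hφ 1 2).mp hvw
      rw [I2E1] at e1 e2
      exact absurd (φ.injective (e1.1.trans e2.1.symm)) (by decide)
    · have e1 := (hφ 0 2).mp huw
      have e2 := (hφ 1 2).mp hvw
      rw [I3] at e1 e2
      exact absurd (φ.injective (Fin.ext (Nat.succ_injective (e1.symm.trans e2)))) (by decide)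
    · have e1 := (hφ 0 2).mp huw
      have e2 := (hφ 1 2).mp hvw
      rw [O3] at e1 e2
      have b0 := (φ 0).isLt
      have b1 := (φ 1).isLt
      have b2 := (φ 2).isLt
      have : (φ 0).val = (φ 1).val := by omega
      exact absurd (φ.injective (Fin.ext this)) (by decide)

theorem io_of_good {n : ℕ} (E : Fin n → Fin n → Prop) (h : Good E) : IsIO E := by
  obtain ⟨hl, ha, ho, hi⟩ := h
  refine ⟨?_, ?_, ?_⟩
  · intro φ
    exact ⟨Equiv.refl _, fun u v => by
      rw [Subsingleton.elim v u]
      simp [E1]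
      exact hl _⟩
  · intro φ
    exact classify2 _ (fun v => hl _) (fun u v h => ha _ _ h)
  · intro φ
    exact classify3 _ (fun v => hl _) (fun u v h => ha _ _ h)
      (fun u v w h1 h2 => φ.injective (ho _ _ _ h1 h2))
      (fun u v w h1 h2 => φ.injective (hi _ _ _ h1 h2))

theorem mod_succ_lt (x c : ℕ) (hx : x < c) :
    (x + 1) % c = if x + 1 = c then 0 else x + 1 := by
  split
  · simp [*]
  · exact Nat.mod_eq_of_lt (by omega)

theorem durel_good (k : ℕ) (c : Fin k → ℕ) (bc : Fin k → Bool)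
    (hc : ∀ i, 0 < c i) (hbc : ∀ i, bc i = true → 3 ≤ c i) :
    Good (DURel k c bc) := by
  refine ⟨?_, ?_, ?_, ?_⟩
  · rintro ⟨i, x⟩ ⟨-, h⟩
    have H : (if bc i then (x.val + 1) % c i = x.val else x.val = x.val + 1) := h
    have hx := x.isLt
    split at H
    · have h3 := hbc i (by assumption)
      rw [mod_succ_lt _ _ hx] at H
      split at H <;> omega
    · omega
  · rintro ⟨i, x⟩ ⟨j, y⟩ ⟨he1, h1⟩ ⟨he2, h2⟩
    have he : i = j := he1
    subst he
    have H1 : (if bc i then (x.val + 1) % c i = y.val else y.val = x.val + 1) := h1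
    have H2 : (if bc i then (y.val + 1) % c i = x.val else x.val = y.val + 1) := h2
    have hx := x.isLt
    have hy := y.isLt
    split at H1
    · have h3 := hbc i (by assumption)
      rw [if_pos (by assumption)] at H2
      rw [mod_succ_lt _ _ hx] at H1
      rw [mod_succ_lt _ _ hy] at H2
      split at H1 <;> split at H2 <;> omega
    · rw [if_neg (by assumption)] at H2
      omega
  · rintro ⟨i, x⟩ ⟨j, y⟩ ⟨l, z⟩ ⟨he1, h1⟩ ⟨he2, h2⟩
    have he : i = j := he1
    subst he
    have he' : i = l := he2
    subst he'
    have H1 : (if bc i then (x.val + 1) % c i = y.val else y.val = x.val + 1) := h1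
    have H2 : (if bc i then (x.val + 1) % c i = z.val else z.val = x.val + 1) := h2
    refine Sigma.ext rfl (heq_of_eq (Fin.ext ?_))
    show y.val = z.val
    split at H1
    · rw [if_pos (by assumption)] at H2
      omega
    · rw [if_neg (by assumption)] at H2
      omega
  · rintro ⟨i, x⟩ ⟨j, y⟩ ⟨l, z⟩ ⟨he1, h1⟩ ⟨he2, h2⟩
    have he : i = l := he1
    subst he
    have he' : j = i := he2
    subst he'
    have H1 : (if bc j then (x.val + 1) % c j = z.val else z.val = x.val + 1) := h1
    have H2 : (if bc j then (y.val + 1) % c j = z.val else z.val = y.val + 1) := h2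
    refine Sigma.ext rfl (heq_of_eq (Fin.ext ?_))
    show x.val = y.val
    have hx := x.isLt
    have hy := y.isLt
    have hz := z.isLt
    split at H1
    · rw [if_pos (by assumption)] at H2
      rw [mod_succ_lt _ _ hx] at H1
      rw [mod_succ_lt _ _ hy] at H2
      split at H1 <;> split at H2 <;> omega
    · rw [if_neg (by assumption)] at H2
      omega

theorem good_of_iso {α β : Type} {E : α → α → Prop} {F : β → β → Prop}
    (h : IsoT E F) (hF : Good F) : Good E := by
  obtain ⟨φ, hφ⟩ := h
  obtain ⟨hl, ha, ho, hi⟩ := hF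
  refine ⟨fun v hv => hl _ ((hφ v v).mp hv),
    fun u v h1 h2 => ha _ _ ((hφ u v).mp h1) ((hφ v u).mp h2),
    fun u v w h1 h2 => φ.injective (ho _ _ _ ((hφ u v).mp h1) ((hφ u w).mp h2)),
    fun u v w h1 h2 => φ.injective (hi _ _ _ ((hφ u w).mp h1) ((hφ v w).mp h2))⟩

open Classical in
noncomputable def traj {α : Type} (E : α → α → Prop) (v : α) : ℕ → α
  | 0 => v
  | n+1 => if h : ∃ w, E (traj E v n) w then h.choose else traj E v n

theorem traj_succ {α : Type} (E : α → α → Prop) (v : α) (n : ℕ)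
    (h : ∃ w, E (traj E v n) w) : E (traj E v n) (traj E v (n+1)) := by
  rw [traj, dif_pos h]
  exact h.choose_spec

/-- descent: equal points on a chain pull back to the start -/
theorem traj_descent {α : Type} {E : α → α → Prop} {v : α} (hG : Good E) (m : ℕ)
    (H : ∀ j < m, E (traj E v j) (traj E v (j+1))) :
    ∀ i j, i ≤ j → j ≤ m → traj E v i = traj E v j → traj E v 0 = traj E v (j - i) := by
  intro i
  induction i with
  | zero => intro j _ _ h; simpa using h
  | succ i ih =>
    intro j hij hjm heq
    obtain ⟨jj, rfl⟩ : ∃ jj, j = jj + 1 := ⟨j - 1, by omega⟩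
    have e1 : E (traj E v i) (traj E v (i+1)) := H i (by omega)
    have e2 : E (traj E v jj) (traj E v (jj+1)) := H jj (by omega)
    rw [heq] at e1
    have : traj E v i = traj E v jj := hG.2.2.2 _ _ _ e1 e2
    have h0 := ih jj (by omega) (by omega) this
    simpa [Nat.succ_sub_succ] using h0

theorem exists_component {α : Type} [Fintype α] [Nonempty α] (E : α → α → Prop) (hG : Good E) :
    ∃ (m : ℕ) (b : Bool) (p : Fin m → α), 0 < m ∧ (b = true → 3 ≤ m) ∧ Function.Injective p ∧
      (∀ a b' : Fin m, E (p a) (p b') ↔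
        (if b then (a.val + 1) % m = b'.val else b'.val = a.val + 1)) ∧
      (∀ x, (∀ i, p i ≠ x) → ∀ i, ¬ E x (p i) ∧ ¬ E (p i) x) := by
  classical
  obtain ⟨hl, ha, ho, hi⟩ := hG
  by_cases hA : ∃ v, ∀ u, ¬ E u v
  · -- line case
    obtain ⟨v, hv⟩ := hA
    set g := traj E v with hgdef
    have hg0 : g 0 = v := rfl
    have hstop : ∃ m, ¬ ∃ w, E (g m) w := by
      by_contra hc
      push_neg at hc
      have H : ∀ j, E (g j) (g (j+1)) := fun j => traj_succ E v j (hc j)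
      have hinjlt : ∀ i j, i < j → g i ≠ g j := by
        intro i j hij heq
        have h0 := traj_descent ⟨hl, ha, ho, hi⟩ j (fun t _ => H t) i j (le_of_lt hij)
          le_rfl heq
        obtain ⟨t, ht⟩ : ∃ t, j - i = t + 1 := ⟨j - i - 1, by omega⟩
        have h0' : g 0 = g (j - i) := h0
        have e := H t
        rw [← ht, ← h0', hg0] at e
        exact hv _ e
      have hinj : Function.Injective g := by
        intro i j heq
        rcases lt_trichotomy i j with h | h | h
        · exact absurd heq (hinjlt i j h)
        · exact h
        · exact absurd heq.symm (hinjlt j i h)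
      haveI := Finite.of_injective g hinj
      exact not_finite ℕ
    set m := Nat.find hstop with hmdef
    have hm : ¬ ∃ w, E (g m) w := Nat.find_spec hstop
    have H : ∀ j < m, E (g j) (g (j+1)) := by
      intro j hj
      have := Nat.find_min hstop hj
      rw [not_not] at this
      exact traj_succ E v j this
    have hne : ∀ i j : ℕ, i ≤ j → j ≤ m → g i = g j → i = j := by
      intro i j hij hjm heq
      by_contra hneq
      have hlt : i < j := by omega
      have h0 := traj_descent ⟨hl, ha, ho, hi⟩ m H i j hij hjm heq
      obtain ⟨t, ht⟩ : ∃ t, j - i = t + 1 := ⟨j - i - 1, by omega⟩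
      have h0' : g 0 = g (j - i) := h0
      have e := H t (by omega)
      rw [← ht, ← h0', hg0] at e
      exact hv _ e
    refine ⟨m + 1, false, fun a => g a.val, Nat.succ_pos m, by simp, ?_, ?_, ?_⟩
    · intro a b heq
      have h1 := a.isLt
      have h2 := b.isLt
      rcases le_total a.val b.val with h | h
      · exact Fin.ext (hne _ _ h (by omega) heq)
      · exact Fin.ext (hne _ _ h (by omega) heq.symm).symm
    · intro a b'
      show E (g a.val) (g b'.val) ↔ b'.val = a.val + 1
      constructor
      · intro h
        by_cases hav : a.val = m
        · rw [hav] at h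
          exact absurd ⟨_, h⟩ hm
        · have hlt : a.val < m := by have := a.isLt; omega
          have e := H a.val hlt
          have heq : g b'.val = g (a.val + 1) := ho _ _ _ h e
          have h2 := b'.isLt
          have hb'm : b'.val ≤ m := by omega
          have ham : a.val + 1 ≤ m := by omega
          rcases le_total b'.val (a.val + 1) with hc | hc
          · exact hne b'.val (a.val + 1) hc ham heq
          · exact (hne (a.val + 1) b'.val hc hb'm heq.symm).symm
      · intro h
        have hlt : a.val < m := by have := b'.isLt; omega
        have e := H a.val hlt
        have : g b'.val = g (a.val + 1) := by rw [h]
        rw [← this] at e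
        exact e
    · intro x hx i
      constructor
      · intro h
        have h' : E x (g i.val) := h
        rcases Nat.eq_zero_or_pos i.val with h0 | h0
        · rw [h0, hg0] at h'
          exact hv x h'
        · obtain ⟨t, ht⟩ : ∃ t, i.val = t + 1 := ⟨i.val - 1, by omega⟩
          have e := H t (by have := i.isLt; omega)
          rw [← ht] at e
          have hxt : x = g t := hi _ _ _ h' e
          exact hx ⟨t, by have := i.isLt; omega⟩ hxt.symm
      · intro h
        have h' : E (g i.val) x := h
        by_cases hiv : i.val = m
        · rw [hiv] at h'
          exact absurd ⟨_, h'⟩ hm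
        · have e := H i.val (by have := i.isLt; omega)
          have hxt : x = g (i.val + 1) := ho _ _ _ h' e
          exact hx ⟨i.val + 1, by have := i.isLt; omega⟩ hxt.symm
  · -- circle case
    push_neg at hA
    have hsucc : ∀ u, ∃ w, E u w := by
      set pr : α → α := fun v => (hA v).choose with hprdef
      have hpr : ∀ v, E (pr v) v := fun v => (hA v).choose_spec
      have hprinj : Function.Injective pr := by
        intro a b heq
        have h1 := hpr a
        have h2 := hpr b
        rw [heq] at h1
        exact ho _ _ _ h1 h2
      have hsurj := (Finite.injective_iff_surjective).mp hprinj
      intro u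
      obtain ⟨a, haa⟩ := hsurj u
      exact ⟨a, by rw [← haa]; exact hpr a⟩
    set v := Classical.arbitrary α with hvdef
    set g := traj E v with hgdef
    have hg0 : g 0 = v := rfl
    have H : ∀ j, E (g j) (g (j+1)) := fun j => traj_succ E v j (hsucc _)
    have hret : ∃ t, 0 < t ∧ g t = g 0 := by
      have hninj : ¬ Function.Injective g := by
        intro hinj
        haveI := Finite.of_injective g hinj
        exact not_finite ℕ
      rw [Function.not_injective_iff] at hninj
      obtain ⟨i, j, heq, hneq⟩ := hninj
      rcases lt_or_gt_of_ne hneq with h | h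
      · have h0 := traj_descent ⟨hl, ha, ho, hi⟩ j (fun t _ => H t) i j (le_of_lt h)
          le_rfl heq
        exact ⟨j - i, by omega, h0.symm⟩
      · have h0 := traj_descent ⟨hl, ha, ho, hi⟩ i (fun t _ => H t) j i (le_of_lt h)
          le_rfl heq.symm
        exact ⟨i - j, by omega, h0.symm⟩
    set m := Nat.find hret with hmdef
    obtain ⟨hm0, hmv⟩ : 0 < m ∧ g m = g 0 := Nat.find_spec hret
    have hmin : ∀ t, 0 < t → t < m → g t ≠ g 0 := by
      intro t h1 h2 hc
      exact Nat.find_min hret h2 ⟨h1, hc⟩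
    have hm3 : 3 ≤ m := by
      by_contra hlt3
      have e0 : E (g 0) (g 1) := H 0
      rcases (by omega : m = 1 ∨ m = 2) with h1 | h2
      · have hmv1 : g 1 = g 0 := h1 ▸ hmv
        rw [hmv1] at e0
        exact hl _ e0
      · have e1 : E (g 1) (g 2) := H 1
        have hmv2 : g 2 = g 0 := h2 ▸ hmv
        rw [hmv2] at e1
        exact ha _ _ e0 e1
    have hne : ∀ i j : ℕ, i ≤ j → j < m → g i = g j → i = j := by
      intro i j hij hjm heq
      by_contra hneq
      have h0 := traj_descent ⟨hl, ha, ho, hi⟩ j (fun t _ => H t) i j hij le_rfl heq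
      exact hmin (j - i) (by omega) (by omega) h0.symm
    refine ⟨m, true, fun a => g a.val, hm0, fun _ => hm3, ?_, ?_, ?_⟩
    · intro a b heq
      rcases le_total a.val b.val with h | h
      · exact Fin.ext (hne _ _ h b.isLt heq)
      · exact Fin.ext (hne _ _ h a.isLt heq.symm).symm
    · intro a b'
      show E (g a.val) (g b'.val) ↔ (a.val + 1) % m = b'.val
      constructor
      · intro h
        have e := H a.val
        have heq := ho _ _ _ h e
        by_cases hav : a.val + 1 < m
        · have heq2 : g b'.val = g (a.val + 1) := heq
          have : b'.val = a.val + 1 := by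
            rcases le_total b'.val (a.val + 1) with hc | hc
            · exact hne _ _ hc hav heq2
            · exact (hne _ _ hc b'.isLt heq2.symm).symm
          rw [this, Nat.mod_eq_of_lt hav]
        · have hav2 : a.val + 1 = m := by have := a.isLt; omega
          rw [hav2, hmv] at heq
          have : b'.val = 0 := hne 0 b'.val (Nat.zero_le _) b'.isLt heq.symm |>.symm
          rw [this, hav2, Nat.mod_self]
      · intro h
        have e := H a.val
        by_cases hav : a.val + 1 < m
        · rw [Nat.mod_eq_of_lt hav] at h
          have : g b'.val = g (a.val + 1) := by rw [← h]
          rwa [← this] at e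
        · have hav2 : a.val + 1 = m := by have := a.isLt; omega
          rw [hav2, Nat.mod_self] at h
          have : g b'.val = g (a.val + 1) := by rw [← h, hav2, hmv]
          rwa [← this] at e
    · intro x hx i
      constructor
      · intro h
        have h' : E x (g i.val) := h
        rcases Nat.eq_zero_or_pos i.val with h0 | h0
        · have e := H (m - 1)
          rw [show m - 1 + 1 = m by omega, hmv, ← h0] at e
          have hxt : x = g (m - 1) := hi _ _ _ h' e
          exact hx ⟨m - 1, by omega⟩ hxt.symm
        · obtain ⟨t, ht⟩ : ∃ t, i.val = t + 1 := ⟨i.val - 1, by omega⟩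
          have e := H t
          rw [← ht] at e
          have hxt : x = g t := hi _ _ _ h' e
          exact hx ⟨t, by have := i.isLt; omega⟩ hxt.symm
      · intro h
        have h' : E (g i.val) x := h
        have e := H i.val
        have hxt : x = g (i.val + 1) := ho _ _ _ h' e
        by_cases hiv : i.val + 1 < m
        · exact hx ⟨i.val + 1, hiv⟩ hxt.symm
        · have hiv2 : i.val + 1 = m := by have := i.isLt; omega
          rw [hiv2, hmv] at hxt
          exact hx ⟨0, hm0⟩ hxt.symm

def consSigmaEquiv {k : ℕ} (m : ℕ) (c : Fin k → ℕ) :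
    (Fin m ⊕ ((i : Fin k) × Fin (c i))) ≃ ((i : Fin (k+1)) × Fin ((Fin.cons m c : Fin (k+1) → ℕ) i)) where
  toFun x := match x with
    | Sum.inl a => ⟨0, a⟩
    | Sum.inr ⟨i, y⟩ => ⟨i.succ, y⟩
  invFun s := Fin.cases (motive := fun i => Fin ((Fin.cons m c : Fin (k+1) → ℕ) i) →
      (Fin m ⊕ ((i : Fin k) × Fin (c i)))) (fun y => Sum.inl y) (fun i y => Sum.inr ⟨i, y⟩) s.1 s.2
  left_inv x := by
    rcases x with a | ⟨i, y⟩
    · simp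
    · simp
  right_inv s := by
    obtain ⟨i, y⟩ := s
    induction i using Fin.cases with
    | zero => simp
    | succ i => simp

theorem durel_lift (k m : ℕ) (c : Fin k → ℕ) (b0 : Bool) (bc : Fin k → Bool)
    (s t : (i : Fin k) × Fin (c i)) :
    DURel (k+1) (Fin.cons m c) (Fin.cons b0 bc) ⟨s.1.succ, s.2⟩ ⟨t.1.succ, t.2⟩ ↔
      DURel k c bc s t := by
  obtain ⟨i, x⟩ := s
  obtain ⟨j, y⟩ := t
  show (i.succ = j.succ ∧ _) ↔ (i = j ∧ _)
  constructor
  · rintro ⟨h1, h2⟩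
    exact ⟨Fin.succ_injective _ h1, h2⟩
  · rintro ⟨h1, h2⟩
    exact ⟨by rw [h1], h2⟩

theorem decomp : ∀ (N : ℕ) (α : Type) [Fintype α] [DecidableEq α], Fintype.card α = N →
    ∀ E : α → α → Prop, Good E →
    ∃ (k : ℕ) (c : Fin k → ℕ) (bc : Fin k → Bool),
      (∀ i, 0 < c i) ∧ (∀ i, bc i = true → 3 ≤ c i) ∧ IsoT E (DURel k c bc) := by
  intro N
  induction N using Nat.strong_induction_on with
  | _ N ih =>
    intro α _ _ hcard E hG
    rcases isEmpty_or_nonempty α with he | hne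
    · exact ⟨0, Fin.elim0, Fin.elim0, fun i => i.elim0, fun i => i.elim0,
        Equiv.equivOfIsEmpty _ _, fun u v => (he.false u).elim⟩
    · classical
      obtain ⟨m, b0, p, hm0, hb3, hpinj, hchar, hclosed⟩ := exists_component E hG
      set S : Set α := Set.range p with hSdef
      let E' : ↥(Sᶜ) → ↥(Sᶜ) → Prop := fun u v => E u.val v.val
      have hG' : Good E' := by
        obtain ⟨hl, ha, ho, hi⟩ := hG
        exact ⟨fun v => hl v.val, fun u v h => ha _ _ h,
          fun u v w h1 h2 => Subtype.ext (ho _ _ _ h1 h2),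
          fun u v w h1 h2 => Subtype.ext (hi _ _ _ h1 h2)⟩
      have hcardS : Fintype.card S = m := by
        have h : Fintype.card S = Fintype.card (Fin m) :=
          Fintype.card_eq.mpr ⟨(Equiv.ofInjective p hpinj).symm⟩
        simpa using h
      have hcard' : Fintype.card ↥(Sᶜ) < N := by
        rw [Fintype.card_compl_set, hcardS, ← hcard]
        have : 0 < Fintype.card α := Fintype.card_pos
        have hmle : m ≤ Fintype.card α := by
          rw [← hcardS]
          exact Fintype.card_le_of_injective _ Subtype.coe_injective
        omega
      obtain ⟨k', c', bc', hc', hbc', ψ, hψ⟩ :=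
        ih _ hcard' ↥(Sᶜ) rfl E' hG'
      refine ⟨k' + 1, Fin.cons m c', Fin.cons b0 bc', ?_, ?_, ?_⟩
      · intro i
        induction i using Fin.cases with
        | zero => simpa using hm0
        | succ i => simpa using hc' i
      · intro i
        induction i using Fin.cases with
        | zero => simpa using hb3
        | succ i => simpa using hbc' i
      · refine ⟨((Equiv.Set.sumCompl S).symm.trans
          ((Equiv.sumCongr (Equiv.ofInjective p hpinj).symm ψ).trans (consSigmaEquiv m c'))), ?_⟩
        intro u v
        by_cases hu : u ∈ S <;> by_cases hv : v ∈ S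
        · set a := (Equiv.ofInjective p hpinj).symm ⟨u, hu⟩ with hadef
          set b := (Equiv.ofInjective p hpinj).symm ⟨v, hv⟩ with hbdef
          have hpa : p a = u := Equiv.apply_ofInjective_symm hpinj ⟨u, hu⟩
          have hpb : p b = v := Equiv.apply_ofInjective_symm hpinj ⟨v, hv⟩
          have hφu : ((Equiv.Set.sumCompl S).symm.trans
              ((Equiv.sumCongr (Equiv.ofInjective p hpinj).symm ψ).trans (consSigmaEquiv m c'))) u
              = ⟨0, a⟩ := by
            rw [Equiv.trans_apply, Equiv.trans_apply, Equiv.Set.sumCompl_symm_apply_of_mem hu]; rfl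
          have hφv : ((Equiv.Set.sumCompl S).symm.trans
              ((Equiv.sumCongr (Equiv.ofInjective p hpinj).symm ψ).trans (consSigmaEquiv m c'))) v
              = ⟨0, b⟩ := by
            rw [Equiv.trans_apply, Equiv.trans_apply, Equiv.Set.sumCompl_symm_apply_of_mem hv]; rfl
          rw [hφu, hφv, ← hpa, ← hpb]
          refine (hchar a b).trans ?_
          constructor
          · intro h
            exact ⟨rfl, h⟩
          · intro h
            exact h.2
        · set a := (Equiv.ofInjective p hpinj).symm ⟨u, hu⟩ with hadef
          have hpa : p a = u := Equiv.apply_ofInjective_symm hpinj ⟨u, hu⟩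
          have hφu : ((Equiv.Set.sumCompl S).symm.trans
              ((Equiv.sumCongr (Equiv.ofInjective p hpinj).symm ψ).trans (consSigmaEquiv m c'))) u
              = ⟨0, a⟩ := by
            rw [Equiv.trans_apply, Equiv.trans_apply, Equiv.Set.sumCompl_symm_apply_of_mem hu]; rfl
          have hφv : ((Equiv.Set.sumCompl S).symm.trans
              ((Equiv.sumCongr (Equiv.ofInjective p hpinj).symm ψ).trans (consSigmaEquiv m c'))) v
              = ⟨(ψ ⟨v, hv⟩).1.succ, (ψ ⟨v, hv⟩).2⟩ := by
            rw [Equiv.trans_apply, Equiv.trans_apply, Equiv.Set.sumCompl_symm_apply_of_notMem hv]; rfl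
          rw [hφu, hφv]
          constructor
          · intro h
            exfalso
            have hnv : ∀ i, p i ≠ v := fun i hiv => hv ⟨i, hiv⟩
            exact (hclosed v hnv a).2 (by rw [hpa]; exact h)
          · rintro ⟨h1, -⟩
            exact absurd h1.symm (Fin.succ_ne_zero _)
        · set b := (Equiv.ofInjective p hpinj).symm ⟨v, hv⟩ with hbdef
          have hpb : p b = v := Equiv.apply_ofInjective_symm hpinj ⟨v, hv⟩
          have hφv : ((Equiv.Set.sumCompl S).symm.trans
              ((Equiv.sumCongr (Equiv.ofInjective p hpinj).symm ψ).trans (consSigmaEquiv m c'))) v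
              = ⟨0, b⟩ := by
            rw [Equiv.trans_apply, Equiv.trans_apply, Equiv.Set.sumCompl_symm_apply_of_mem hv]; rfl
          have hφu : ((Equiv.Set.sumCompl S).symm.trans
              ((Equiv.sumCongr (Equiv.ofInjective p hpinj).symm ψ).trans (consSigmaEquiv m c'))) u
              = ⟨(ψ ⟨u, hu⟩).1.succ, (ψ ⟨u, hu⟩).2⟩ := by
            rw [Equiv.trans_apply, Equiv.trans_apply, Equiv.Set.sumCompl_symm_apply_of_notMem hu]; rfl
          rw [hφu, hφv]
          constructor
          · intro h
            exfalso
            have hnu : ∀ i, p i ≠ u := fun i hiu => hu ⟨i, hiu⟩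
            exact (hclosed u hnu b).1 (by rw [hpb]; exact h)
          · rintro ⟨h1, -⟩
            exact absurd h1 (Fin.succ_ne_zero _)
        · have hφu : ((Equiv.Set.sumCompl S).symm.trans
              ((Equiv.sumCongr (Equiv.ofInjective p hpinj).symm ψ).trans (consSigmaEquiv m c'))) u
              = ⟨(ψ ⟨u, hu⟩).1.succ, (ψ ⟨u, hu⟩).2⟩ := by
            rw [Equiv.trans_apply, Equiv.trans_apply, Equiv.Set.sumCompl_symm_apply_of_notMem hu]; rfl
          have hφv : ((Equiv.Set.sumCompl S).symm.trans
              ((Equiv.sumCongr (Equiv.ofInjective p hpinj).symm ψ).trans (consSigmaEquiv m c'))) v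
              = ⟨(ψ ⟨v, hv⟩).1.succ, (ψ ⟨v, hv⟩).2⟩ := by
            rw [Equiv.trans_apply, Equiv.trans_apply, Equiv.Set.sumCompl_symm_apply_of_notMem hv]; rfl
          rw [hφu, hφv]
          rw [durel_lift]
          exact hψ ⟨u, hu⟩ ⟨v, hv⟩

/-- A finite digraph is an IO-graph iff it is a disjoint union of
lines (directed paths) and/or circles (directed cycles). -/
theorem isIO_iff_disjUnion_lines_circles {n : ℕ} (hn : 0 < n) (E : Fin n → Fin n → Prop) :
    IsIO E ↔ ∃ (k : ℕ) (c : Fin k → ℕ) (bc : Fin k → Bool),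
      (∀ i, 0 < c i) ∧ (∀ i, bc i = true → 3 ≤ c i) ∧
      IsoT E (DURel k c bc) := by
  constructor
  · intro h
    exact decomp (Fintype.card (Fin n)) (Fin n) rfl E (good_of_io E h)
  · rintro ⟨k, c, bc, hc, hbc, hiso⟩
    exact io_of_good E (good_of_iso hiso (durel_good k c bc hc hbc))
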